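/- Let m ≥ 2 and let a ∈ (0, 1). Let K : ℝ^m \ {0} → (0, ∞) be a function satisfying K(ξ) ≤ a(m−1)/‖ξ‖ for every ξ ≠ 0. Then there exists no C² function u : ℝ^m \ {0} → ℝ, positively homogeneous of degree 0, solving the vertical mean curvature equation for K. -/

import Mathlib

open Set Filter Topology

/-- 1D second derivative test: at a local max, the second derivative is nonpositive. -/
lemma second_deriv_nonpos_of_isLocalMax {g : ℝ → ℝ} {c : ℝ}
    (hmax : IsLocalMax g 0)
    (hdiff : ∀ᶠ t in 𝓝 (0:ℝ), DifferentiableAt ℝ g t)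
    (hdd : HasDerivAt (deriv g) c 0) : c ≤ 0 := by
  by_contra hc
  push_neg at hc
  have h0 : deriv g 0 = 0 := hmax.deriv_eq_zero
  have hslope : Tendsto (fun t : ℝ => t⁻¹ * deriv g t) (𝓝[≠] 0) (𝓝 c) := by
    have := hasDerivAt_iff_tendsto_slope.mp hdd
    simpa [slope_fun_def, h0] using this
  have hpos : ∀ᶠ t in 𝓝[>] (0:ℝ), 0 < deriv g t := by
    have h1 : ∀ᶠ t in 𝓝[≠] (0:ℝ), 0 < t⁻¹ * deriv g t :=
      hslope.eventually (eventually_gt_nhds hc)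
    have hsub : (Ioi (0:ℝ)) ⊆ {(0:ℝ)}ᶜ := fun t ht => (ne_of_gt ht)
    filter_upwards [h1.filter_mono (nhdsWithin_mono 0 hsub), self_mem_nhdsWithin]
      with t h1t h2t
    have : 0 < t * (t⁻¹ * deriv g t) := mul_pos h2t h1t
    rwa [mul_inv_cancel_left₀ (ne_of_gt h2t)] at this
  obtain ⟨ε₁, hε₁, hd⟩ := Metric.eventually_nhds_iff.mp hdiff
  obtain ⟨ε₂, hε₂, hmle⟩ := Metric.eventually_nhds_iff.mp hmax
  obtain ⟨b, hb, hIoo⟩ := mem_nhdsGT_iff_exists_Ioo_subset.mp hpos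
  set x : ℝ := min (min ε₁ ε₂) b / 2 with hxdef
  have hx0 : 0 < x := by
    have hb' : (0:ℝ) < b := hb
    positivity
  have habc : min (min ε₁ ε₂) b ≤ min ε₁ ε₂ := min_le_left _ _
  have habc2 : min (min ε₁ ε₂) b ≤ b := min_le_right _ _
  have hab1 : min ε₁ ε₂ ≤ ε₁ := min_le_left _ _
  have hab2 : min ε₁ ε₂ ≤ ε₂ := min_le_right _ _
  have hb' : (0:ℝ) < b := hb
  have hxε₁ : x < ε₁ := by rw [hxdef]; linarith
  have hxε₂ : x < ε₂ := by rw [hxdef]; linarith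
  have hxb : x < b := by rw [hxdef]; linarith
  have hdiffIcc : ∀ t ∈ Icc (0:ℝ) x, DifferentiableAt ℝ g t := by
    intro t ht
    apply hd
    rw [Real.dist_eq, sub_zero, abs_of_nonneg ht.1]
    exact lt_of_le_of_lt ht.2 hxε₁
  obtain ⟨c', hc', hce⟩ := exists_hasDerivAt_eq_slope g (deriv g) hx0
    (fun t ht => (hdiffIcc t ht).continuousAt.continuousWithinAt)
    (fun t ht => (hdiffIcc t (Ioo_subset_Icc_self ht)).hasDerivAt)
  have hposc : 0 < deriv g c' := hIoo ⟨hc'.1, lt_trans hc'.2 hxb⟩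
  have hgx : g x ≤ g 0 := by
    apply hmle
    rw [Real.dist_eq, sub_zero, abs_of_pos hx0]
    exact hxε₂
  rw [hce, sub_zero] at hposc
  have := mul_pos hposc hx0
  rw [div_mul_cancel₀ _ (ne_of_gt hx0)] at this
  linarith

/-- `u` solves the vertical mean curvature equation for `K`: for every unit vector `ξ`,
`(1 + ‖∇u‖²) Δu − D²u(∇u, ∇u) = (m−1)(1 + ‖∇u‖²) − (1 + ‖∇u‖²)^{3/2} e^u K(e^u ξ)`,
where `∇u` is the gradient, `D²u` the Hessian, and `Δu` the Laplacian (trace of the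
Hessian over the standard orthonormal basis). -/
def SolvesVerticalMeanCurvatureEq (m : ℕ)
    (u K : EuclideanSpace ℝ (Fin m) → ℝ) : Prop :=
  ∀ ξ : EuclideanSpace ℝ (Fin m), ‖ξ‖ = 1 →
    (1 + ‖gradient u ξ‖ ^ 2) *
        (∑ i : Fin m, fderiv ℝ (fderiv ℝ u) ξ (EuclideanSpace.single i 1)
          (EuclideanSpace.single i 1))
      - fderiv ℝ (fderiv ℝ u) ξ (gradient u ξ) (gradient u ξ)
    = (m - 1 : ℝ) * (1 + ‖gradient u ξ‖ ^ 2)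
      - (1 + ‖gradient u ξ‖ ^ 2) ^ ((3 : ℝ) / 2) * Real.exp (u ξ)
        * K (Real.exp (u ξ) • ξ)

/-- Nonexistence (§5.4, Remark 1, first claim): if `K > 0` satisfies
`K(ξ) ≤ a(m−1)/‖ξ‖` for some `a ∈ (0,1)` and all `ξ ≠ 0`, then there is no C²,
positively 0-homogeneous solution of the vertical mean curvature equation for `K`. -/
theorem nonexistence_small_K (m : ℕ) (hm : 2 ≤ m) (a : ℝ) (ha0 : 0 < a) (ha1 : a < 1)
    (K : EuclideanSpace ℝ (Fin m) → ℝ)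
    (hKpos : ∀ ξ : EuclideanSpace ℝ (Fin m), ξ ≠ 0 → 0 < K ξ)
    (hKle : ∀ ξ : EuclideanSpace ℝ (Fin m), ξ ≠ 0 → K ξ ≤ a * (m - 1 : ℝ) / ‖ξ‖) :
    ¬ ∃ u : EuclideanSpace ℝ (Fin m) → ℝ,
        (∀ x : EuclideanSpace ℝ (Fin m), x ≠ 0 → ContDiffAt ℝ 2 u x) ∧
        (∀ t : ℝ, 0 < t → ∀ x : EuclideanSpace ℝ (Fin m), x ≠ 0 → u (t • x) = u x) ∧
        SolvesVerticalMeanCurvatureEq m u K := by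
  rintro ⟨u, hu, hhom, heq⟩
  haveI : Nonempty (Fin m) := ⟨⟨0, by omega⟩⟩
  haveI : Nontrivial (EuclideanSpace ℝ (Fin m)) := inferInstance
  -- maximum of u on the unit sphere
  have hcont : ContinuousOn u (Metric.sphere (0 : EuclideanSpace ℝ (Fin m)) 1) := by
    intro x hx
    have hx0 : x ≠ 0 := by
      rw [mem_sphere_zero_iff_norm] at hx
      intro h; rw [h] at hx; simp at hx
    exact ((hu x hx0).continuousAt).continuousWithinAt
  obtain ⟨ξ₀, hξ₀mem, hmax⟩ := (isCompact_sphere (0 : EuclideanSpace ℝ (Fin m)) 1).exists_isMaxOn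
    (NormedSpace.sphere_nonempty.mpr zero_le_one) hcont
  have hξ₀ : ‖ξ₀‖ = 1 := mem_sphere_zero_iff_norm.mp hξ₀mem
  have hξ₀ne : ξ₀ ≠ 0 := by intro h; rw [h] at hξ₀; simp at hξ₀
  -- ξ₀ is a local maximum of u on the open set of nonzero vectors
  have hloc : IsLocalMax u ξ₀ := by
    have hopen : {x : EuclideanSpace ℝ (Fin m) | x ≠ 0} ∈ 𝓝 ξ₀ := by
      exact isOpen_compl_singleton.mem_nhds (by simpa using hξ₀ne)
    filter_upwards [hopen] with x hx
    have hx0 : ‖x‖ ≠ 0 := norm_ne_zero_iff.mpr hx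
    have hxpos : (0:ℝ) < ‖x‖ := norm_pos_iff.mpr hx
    have h1 : u (‖x‖⁻¹ • x) = u x := hhom _ (by positivity) x hx
    have h2 : ‖x‖⁻¹ • x ∈ Metric.sphere (0 : EuclideanSpace ℝ (Fin m)) 1 := by
      rw [mem_sphere_zero_iff_norm, norm_smul, norm_inv, norm_norm,
        inv_mul_cancel₀ hx0]
    calc u x = u (‖x‖⁻¹ • x) := h1.symm
      _ ≤ u ξ₀ := hmax h2
  have hev : ∀ᶠ x in 𝓝 ξ₀, DifferentiableAt ℝ u x := by
    filter_upwards [(hu ξ₀ hξ₀ne).eventually (by simp)] with x hx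
    exact hx.differentiableAt (by norm_num)
  -- second derivative test in each direction
  have key : ∀ v : EuclideanSpace ℝ (Fin m), fderiv ℝ (fderiv ℝ u) ξ₀ v v ≤ 0 := by
    intro v
    set ℓ : ℝ → EuclideanSpace ℝ (Fin m) := fun t => ξ₀ + t • v with hℓdef
    have hℓ0 : ℓ 0 = ξ₀ := by simp [hℓdef]
    have hℓder : ∀ t : ℝ, HasDerivAt ℓ v t := fun t => by
      simpa [hℓdef] using ((hasDerivAt_id t).smul_const v).const_add ξ₀
    have hℓcont : Continuous ℓ := by
      exact continuous_const.add (continuous_id.smul continuous_const)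
    set g : ℝ → ℝ := fun t => u (ℓ t) with hgdef
    have hgm : IsLocalMax g 0 := by
      have h : IsLocalMax u (ℓ 0) := hℓ0 ▸ hloc
      exact h.comp_continuous hℓcont.continuousAt
    have htend : Tendsto ℓ (𝓝 0) (𝓝 ξ₀) := hℓ0 ▸ hℓcont.continuousAt
    have hgdiff : ∀ᶠ t in 𝓝 (0:ℝ),
        DifferentiableAt ℝ g t ∧ deriv g t = fderiv ℝ u (ℓ t) v := by
      filter_upwards [htend.eventually hev] with t ht
      have hgt : HasDerivAt g (fderiv ℝ u (ℓ t) v) t :=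
        ht.hasFDerivAt.comp_hasDerivAt t (hℓder t)
      exact ⟨hgt.differentiableAt, hgt.deriv⟩
    have hD2 : HasDerivAt (deriv g) (fderiv ℝ (fderiv ℝ u) ξ₀ v v) 0 := by
      have hD : DifferentiableAt ℝ (fderiv ℝ u) ξ₀ :=
        ((hu ξ₀ hξ₀ne).fderiv_right (m := 1) (by norm_num)).differentiableAt (by norm_num)
      have hD' : HasFDerivAt (fderiv ℝ u) (fderiv ℝ (fderiv ℝ u) ξ₀) (ℓ 0) :=
        hℓ0.symm ▸ hD.hasFDerivAt
      have h1 : HasDerivAt (fun t => fderiv ℝ u (ℓ t)) (fderiv ℝ (fderiv ℝ u) ξ₀ v) 0 :=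
        hD'.comp_hasDerivAt 0 (hℓder 0)
      have h2 : HasDerivAt (fun t => fderiv ℝ u (ℓ t) v)
          (fderiv ℝ (fderiv ℝ u) ξ₀ v v) 0 := by
        have := (ContinuousLinearMap.apply ℝ ℝ v).hasFDerivAt.comp_hasDerivAt 0 h1
        exact this
      refine h2.congr_of_eventuallyEq ?_
      filter_upwards [hgdiff] with t ht using ht.2
    exact second_deriv_nonpos_of_isLocalMax hgm (hgdiff.mono fun t ht => ht.1) hD2
  -- gradient vanishes at ξ₀
  have hfd0 : fderiv ℝ u ξ₀ = 0 := hloc.fderiv_eq_zero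
  have hgrad0 : gradient u ξ₀ = 0 := by
    simp only [gradient, hfd0, map_zero]
  -- evaluate the equation at ξ₀
  have heq0 := heq ξ₀ hξ₀
  rw [hgrad0] at heq0
  simp only [norm_zero, ne_eq, OfNat.ofNat_ne_zero, not_false_eq_true, zero_pow,
    add_zero, one_mul, map_zero, ContinuousLinearMap.zero_apply, Real.one_rpow,
    sub_zero] at heq0
  have hsum : (∑ i : Fin m, fderiv ℝ (fderiv ℝ u) ξ₀ (EuclideanSpace.single i 1)
      (EuclideanSpace.single i 1)) ≤ 0 :=
    Finset.sum_nonpos fun i _ => key _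
  set r := Real.exp (u ξ₀) with hrdef
  have hr : 0 < r := Real.exp_pos _
  have hne : r • ξ₀ ≠ 0 := smul_ne_zero (ne_of_gt hr) hξ₀ne
  have hKb := hKle _ hne
  have hnorm : ‖r • ξ₀‖ = r := by
    rw [norm_smul, hξ₀, mul_one, Real.norm_eq_abs, abs_of_pos hr]
  rw [hnorm, le_div_iff₀ hr] at hKb
  have hm1 : (1:ℝ) ≤ (m:ℝ) - 1 := by
    have : (2:ℝ) ≤ (m:ℝ) := by exact_mod_cast hm
    linarith
  nlinarith [hsum, hKb, heq0, mul_pos (sub_pos.mpr ha1) (lt_of_lt_of_le one_pos hm1)]
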